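/- Let H, Q ∈ ℝ^{n×n} be symmetric, let S ∈ ℝ^{n×q} be such that Sᵀ·Q·S is positive definite, and suppose H is positive definite. Define the inverse quNac update H⁺ := P(S,Q) + (I − P(S,Q)·Q)·H·(I − Q·P(S,Q)), where P(S,Q) := S(SᵀQS)⁻¹Sᵀ. Then H⁺ is symmetric, positive definite, and satisfies the inverse action constraint H⁺·(Q·S) = S. -/

import Mathlib

open Matrix

/-- The projection-type matrix `P(S,Q) := S (Sᵀ Q S)⁻¹ Sᵀ`. -/
noncomputable def projMat {n q : ℕ} (S : Matrix (Fin n) (Fin q) ℝ)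
    (Q : Matrix (Fin n) (Fin n) ℝ) : Matrix (Fin n) (Fin n) ℝ :=
  S * (Sᵀ * Q * S)⁻¹ * Sᵀ

/-- The inverse quNac update `H⁺ := P(S,Q) + (I − P(S,Q)Q) H (I − Q P(S,Q))` of a
positive definite `H` is symmetric positive definite and satisfies the inverse
action constraint `H⁺(QS) = S`. -/
theorem stmt15 {n q : ℕ} (H Q : Matrix (Fin n) (Fin n) ℝ)
    (hH : H.IsSymm) (hQ : Q.IsSymm)
    (S : Matrix (Fin n) (Fin q) ℝ) (hSQS : (Sᵀ * Q * S).PosDef)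
    (hHpd : H.PosDef) :
    ((projMat S Q + (1 - projMat S Q * Q) * H * (1 - Q * projMat S Q)).IsSymm) ∧
    ((projMat S Q + (1 - projMat S Q * Q) * H * (1 - Q * projMat S Q)).PosDef) ∧
    (projMat S Q + (1 - projMat S Q * Q) * H * (1 - Q * projMat S Q)) * (Q * S) = S := by
  have hAdet : IsUnit (Sᵀ * Q * S).det := (isUnit_iff_isUnit_det _).mp hSQS.isUnit
  have hAinv : (Sᵀ * Q * S)⁻¹ * (Sᵀ * Q * S) = 1 := nonsing_inv_mul _ hAdet
  -- the inverse action of P on Q*S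
  have hPQS : projMat S Q * (Q * S) = S := by
    have h1 : Sᵀ * (Q * S) = Sᵀ * Q * S := (Matrix.mul_assoc _ _ _).symm
    calc projMat S Q * (Q * S)
        = S * ((Sᵀ * Q * S)⁻¹ * (Sᵀ * (Q * S))) := by
          simp [projMat, Matrix.mul_assoc]
      _ = S := by rw [h1, hAinv, Matrix.mul_one]
  -- symmetry of A and P
  have hAT : (Sᵀ * Q * S)ᵀ = Sᵀ * Q * S := by
    simp [transpose_mul, hQ.eq, Matrix.mul_assoc]
  have hP : (projMat S Q)ᵀ = projMat S Q := by
    simp [projMat, transpose_mul, Matrix.transpose_nonsing_inv, hQ.eq, Matrix.mul_assoc]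
  -- symmetry of the update
  have hsymm : ((projMat S Q + (1 - projMat S Q * Q) * H * (1 - Q * projMat S Q))).IsSymm := by
    unfold Matrix.IsSymm
    simp [transpose_add, transpose_mul, transpose_sub, hP, hQ.eq, hH.eq, Matrix.mul_assoc]
  -- constraint
  have hconstraint :
      (projMat S Q + (1 - projMat S Q * Q) * H * (1 - Q * projMat S Q)) * (Q * S) = S := by
    have h0 : (1 - Q * projMat S Q) * (Q * S) = 0 := by
      rw [Matrix.sub_mul, Matrix.one_mul, Matrix.mul_assoc, hPQS, sub_self]
    rw [Matrix.add_mul, hPQS, Matrix.mul_assoc _ _ (Q * S), h0]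
    simp
  refine ⟨hsymm, Matrix.PosDef.of_dotProduct_mulVec_pos ?_ ?_, hconstraint⟩
  · rw [Matrix.IsHermitian, conjTranspose_eq_transpose_of_trivial]
    exact hsymm
  · intro x hx
    have hstar : (star x : Fin n → ℝ) = x := star_trivial x
    set P := projMat S Q with hPdef
    set w := (1 - Q * P) *ᵥ x with hw
    have hCT : (1 - P * Q) = (1 - Q * P)ᵀ := by
      rw [transpose_sub, transpose_one, transpose_mul, hP, hQ.eq]
    -- quadratic form decomposition
    have hdecomp : star x ⬝ᵥ ((P + (1 - P * Q) * H * (1 - Q * P)) *ᵥ x)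
        = x ⬝ᵥ (P *ᵥ x) + w ⬝ᵥ (H *ᵥ w) := by
      rw [hstar, add_mulVec, dotProduct_add]
      congr 1
      rw [hCT, ← Matrix.mulVec_mulVec, ← Matrix.mulVec_mulVec,
        dotProduct_mulVec, vecMul_transpose]
    -- the P-quadratic form
    have hPx : ∀ y : Fin n → ℝ, y ⬝ᵥ (P *ᵥ y)
        = (Sᵀ *ᵥ y) ⬝ᵥ ((Sᵀ * Q * S)⁻¹ *ᵥ (Sᵀ *ᵥ y)) := by
      intro y
      rw [hPdef, projMat, ← Matrix.mulVec_mulVec, ← Matrix.mulVec_mulVec,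
        dotProduct_mulVec, ← mulVec_transpose]
    have hPnn : 0 ≤ x ⬝ᵥ (P *ᵥ x) := by
      rw [hPx]
      have := hSQS.inv.posSemidef.dotProduct_mulVec_nonneg (Sᵀ *ᵥ x)
      simpa [star_trivial] using this
    rw [hdecomp]
    by_cases hw0 : w = 0
    · -- then x = Q *ᵥ (P *ᵥ x), so Sᵀ *ᵥ x ≠ 0
      have hxQP : x = (Q * P) *ᵥ x := by
        have := hw0
        rw [hw, sub_mulVec, one_mulVec, sub_eq_zero] at this
        exact this
      have hy : Sᵀ *ᵥ x ≠ 0 := by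
        intro h
        apply hx
        have hPx0 : P *ᵥ x = 0 := by
          rw [hPdef, projMat, ← Matrix.mulVec_mulVec, ← Matrix.mulVec_mulVec, h,
            mulVec_zero, mulVec_zero]
        rw [hxQP, ← Matrix.mulVec_mulVec, hPx0, mulVec_zero]
      have hpos := hSQS.inv.dotProduct_mulVec_pos hy
      rw [star_trivial] at hpos
      rw [hw0]
      simpa [hPx] using hpos
    · have hpos := hHpd.dotProduct_mulVec_pos hw0
      rw [star_trivial] at hpos
      linarith
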